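/- The Laplace distribution is an exponential scale mixture of normal distributions: for every x ∈ ℝ and every λ > 0, ∫_0^∞ (2πs)^{−1/2} exp(−x²/(2s)) · (λ²/2) exp(−λ² s/2) ds = (λ/2) exp(−λ|x|). -/

import Mathlib

open Real MeasureTheory Set

lemma glasser (a b : ℝ) (ha : 0 < a) (hb : 0 < b) :
    ∫ t in Set.Ioi (0:ℝ), Real.exp (-(b * t ^ 2 + a / t ^ 2)) =
      Real.sqrt Real.pi / (2 * Real.sqrt b) * Real.exp (-(2 * Real.sqrt (a * b))) := by
  set sa := Real.sqrt a with hsa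
  set sb := Real.sqrt b with hsb
  have hsa0 : 0 < sa := Real.sqrt_pos.2 ha
  have hsb0 : 0 < sb := Real.sqrt_pos.2 hb
  have hsa2 : sa ^ 2 = a := Real.sq_sqrt ha.le
  have hsb2 : sb ^ 2 = b := Real.sq_sqrt hb.le
  set φ : ℝ → ℝ := fun t => sb * t - sa / t with hφ
  -- derivative
  have hderiv : ∀ t ∈ Set.Ioi (0:ℝ), HasDerivWithinAt φ (sb + sa / t ^ 2) (Set.Ioi 0) t := by
    intro t ht
    have ht0 : t ≠ 0 := (ne_of_gt ht)
    have h1 : HasDerivAt φ (sb * 1 - sa * (-(t ^ 2)⁻¹)) t := by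
      have h : HasDerivAt (fun y => sb * y - sa * y⁻¹) (sb * 1 - sa * (-(t ^ 2)⁻¹)) t :=
        ((hasDerivAt_id t).const_mul sb).sub ((hasDerivAt_inv ht0).const_mul sa)
      simpa [hφ, div_eq_mul_inv] using h
    have : sb * 1 - sa * (-(t ^ 2)⁻¹) = sb + sa / t ^ 2 := by
      field_simp
      ring
    exact (this ▸ h1).hasDerivWithinAt
  -- injectivity
  have hinj : Set.InjOn φ (Set.Ioi 0) := by
    intro t ht u hu h
    simp only [Set.mem_Ioi] at ht hu
    have ht0 : t ≠ 0 := ne_of_gt ht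
    have hu0 : u ≠ 0 := ne_of_gt hu
    have h' : sb * t * (t * u) - sa * u = sb * u * (t * u) - sa * t := by
      have := h
      simp only [hφ] at this
      field_simp at this
      nlinarith [this]
    have h2 : (t - u) * (sb * (t * u) + sa) = 0 := by linear_combination h'
    have h3 : (0:ℝ) < sb * (t * u) + sa := by positivity
    rcases mul_eq_zero.1 h2 with h4 | h4
    · linarith
    · linarith
  -- surjectivity
  have himg : φ '' Set.Ioi 0 = Set.univ := by
    apply Set.eq_univ_of_forall
    intro u
    set D := Real.sqrt (u ^ 2 + 4 * sa * sb) with hD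
    have hD2 : D ^ 2 = u ^ 2 + 4 * sa * sb := Real.sq_sqrt (by positivity)
    have hDu : -u < D := by
      rcases le_or_gt u 0 with h | h
      · have : (-u) < D := by
          rw [hD]
          rw [show (-u) = Real.sqrt ((-u)^2) from (Real.sqrt_sq (by linarith)).symm]
          apply Real.sqrt_lt_sqrt (by positivity)
          nlinarith
        exact this
      · have : 0 < D := Real.sqrt_pos.2 (by positivity)
        linarith
    set t := (u + D) / (2 * sb) with hT
    have ht : 0 < t := by
      apply div_pos (by linarith) (by linarith)
    refine ⟨t, ht, ?_⟩
    show sb * t - sa / t = u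
    have ht0 : t ≠ 0 := ne_of_gt ht
    field_simp
    rw [hT]
    field_simp
    nlinarith [hD2]
  have hmeas : MeasurableSet (Set.Ioi (0:ℝ)) := measurableSet_Ioi
  set h0 : ℝ → ℝ := fun t => Real.exp (-(φ t) ^ 2) with hh0
  set h1 : ℝ → ℝ := fun t => (sb + sa / t ^ 2) * Real.exp (-(φ t) ^ 2) with hh1
  -- substitution u = φ t
  have sub1 : ∫ u : ℝ, Real.exp (-u ^ 2) =
      ∫ t in Set.Ioi (0:ℝ), h1 t := by
    rw [← setIntegral_univ, ← himg,
      integral_image_eq_integral_abs_deriv_smul hmeas hderiv hinj]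
    apply setIntegral_congr_fun hmeas
    intro t ht
    have ht' : (0:ℝ) < t := ht
    have : |sb + sa / t ^ 2| = sb + sa / t ^ 2 := abs_of_pos (by positivity)
    simp [hh1, this, smul_eq_mul]
  have gauss : ∫ u : ℝ, Real.exp (-u ^ 2) = Real.sqrt Real.pi := by
    have := integral_gaussian 1
    simpa using this
  -- integrability of h1
  have hint1 : MeasureTheory.IntegrableOn h1 (Set.Ioi 0) := by
    have hbase : MeasureTheory.IntegrableOn (fun u : ℝ => Real.exp (-u ^ 2)) (φ '' Set.Ioi 0) := by
      rw [himg, MeasureTheory.integrableOn_univ]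
      have := integrable_exp_neg_mul_sq (by norm_num : (0:ℝ) < 1)
      refine this.congr ?_
      filter_upwards with u
      simp
    have := (integrableOn_image_iff_integrableOn_abs_deriv_smul hmeas hderiv hinj
      (fun u => Real.exp (-u ^ 2))).1 hbase
    refine this.congr_fun ?_ hmeas
    intro t ht
    have ht' : (0:ℝ) < t := ht
    have : |sb + sa / t ^ 2| = sb + sa / t ^ 2 := abs_of_pos (by positivity)
    simp [hh1, this, smul_eq_mul]
  -- integrability of h0
  have hcontφ : ContinuousOn φ (Set.Ioi 0) := by
    apply ContinuousOn.sub
    · exact (continuous_const.mul continuous_id).continuousOn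
    · exact continuousOn_const.div continuousOn_id (fun t ht => ne_of_gt ht)
  have hcont0 : ContinuousOn h0 (Set.Ioi 0) :=
    Real.continuous_exp.comp_continuousOn ((hcontφ.pow 2).neg)
  have hint0 : MeasureTheory.IntegrableOn h0 (Set.Ioi 0) := by
    refine MeasureTheory.Integrable.mono' (hint1.const_mul sb⁻¹)
      (hcont0.aestronglyMeasurable hmeas) ?_
    refine (MeasureTheory.ae_restrict_iff' hmeas).2 (Filter.Eventually.of_forall ?_)
    intro t ht
    have ht' : (0:ℝ) < t := ht
    have h1e : (0:ℝ) < Real.exp (-(φ t) ^ 2) := Real.exp_pos _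
    have hnorm : ‖h0 t‖ = Real.exp (-(φ t) ^ 2) := by
      simp only [hh0, Real.norm_eq_abs]
      exact abs_of_pos h1e
    rw [hnorm, hh1]
    have hq : (0:ℝ) ≤ sa / t ^ 2 := by positivity
    rw [show sb⁻¹ * ((sb + sa / t ^ 2) * Real.exp (-(φ t) ^ 2))
        = (sb⁻¹ * (sb + sa / t ^ 2)) * Real.exp (-(φ t) ^ 2) by ring]
    have hge : (1:ℝ) ≤ sb⁻¹ * (sb + sa / t ^ 2) := by
      rw [inv_mul_eq_div, le_div_iff₀ hsb0, one_mul]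
      linarith
    nlinarith [hge, h1e]
  -- substitution t ↦ c / t kills the odd part
  set c := sa / sb with hc_def
  have hc : 0 < c := div_pos hsa0 hsb0
  set ψ : ℝ → ℝ := fun t => c / t with hψ
  have hderivψ : ∀ t ∈ Set.Ioi (0:ℝ), HasDerivWithinAt ψ (-(c / t ^ 2)) (Set.Ioi 0) t := by
    intro t ht
    have ht0 : t ≠ 0 := ne_of_gt ht
    have h1' : HasDerivAt ψ (c * (-(t ^ 2)⁻¹)) t := by
      simpa [hψ, div_eq_mul_inv] using (hasDerivAt_inv ht0).const_mul c
    have heq : c * (-(t ^ 2)⁻¹) = -(c / t ^ 2) := by field_simp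
    exact (heq ▸ h1').hasDerivWithinAt
  have hinjψ : Set.InjOn ψ (Set.Ioi 0) := by
    intro t ht u hu h
    simp only [Set.mem_Ioi] at ht hu
    have h' : c / t = c / u := h
    rw [div_eq_div_iff (ne_of_gt ht) (ne_of_gt hu)] at h'
    have := mul_left_cancel₀ (ne_of_gt hc) (by linarith [h'] : c * u = c * t)
    linarith
  have himgψ : ψ '' Set.Ioi 0 = Set.Ioi 0 := by
    ext u
    constructor
    · rintro ⟨t, ht, rfl⟩
      exact div_pos hc ht
    · intro hu
      have hu' : (0:ℝ) < u := hu
      exact ⟨c / u, div_pos hc hu', by rw [hψ]; field_simp⟩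
  set g : ℝ → ℝ := fun t => (sb - sa / t ^ 2) * Real.exp (-(φ t) ^ 2) with hg
  have hφc : ∀ t : ℝ, 0 < t → φ (c / t) = -φ t := by
    intro t ht
    simp only [hφ, hc_def]
    field_simp
    ring
  have sub2 : ∫ t in Set.Ioi (0:ℝ), g t = - ∫ t in Set.Ioi (0:ℝ), g t := by
    conv_lhs => rw [← himgψ]
    rw [integral_image_eq_integral_abs_deriv_smul hmeas hderivψ hinjψ, ← MeasureTheory.integral_neg]
    apply setIntegral_congr_fun hmeas
    intro t ht
    have ht' : (0:ℝ) < t := ht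
    have ht0 : t ≠ 0 := ne_of_gt ht'
    have habs : |(-(c / t ^ 2))| = c / t ^ 2 := by
      rw [abs_neg]; exact abs_of_pos (by positivity)
    show |(-(c / t ^ 2))| • g (ψ t) = -g t
    have hgψ : g (ψ t) = (sb - sa / (c / t) ^ 2) * Real.exp (-(φ t) ^ 2) := by
      show (sb - sa / (c / t) ^ 2) * Real.exp (-(φ (c / t)) ^ 2) = _
      rw [hφc t ht', neg_sq]
    have hcoef : c / t ^ 2 * (sb - sa / (c / t) ^ 2) = -(sb - sa / t ^ 2) := by
      rw [hc_def]
      field_simp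
      ring
    rw [habs, smul_eq_mul, hgψ]
    show _ = -((sb - sa / t ^ 2) * Real.exp (-(φ t) ^ 2))
    linear_combination Real.exp (-(φ t) ^ 2) * hcoef
  have hIg0 : ∫ t in Set.Ioi (0:ℝ), g t = 0 := by linarith
  -- combine
  have hgdecomp : g = fun t => 2 * sb * h0 t - h1 t := by
    funext t; simp only [hg, hh0, hh1]; ring
  have hIg : ∫ t in Set.Ioi (0:ℝ), g t
      = 2 * sb * (∫ t in Set.Ioi (0:ℝ), h0 t) - ∫ t in Set.Ioi (0:ℝ), h1 t := by
    rw [hgdecomp, MeasureTheory.integral_sub (hint0.const_mul (2 * sb)) hint1,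
      MeasureTheory.integral_const_mul]
  have hI0val : ∫ t in Set.Ioi (0:ℝ), h0 t = Real.sqrt Real.pi / (2 * sb) := by
    have h1val : ∫ t in Set.Ioi (0:ℝ), h1 t = Real.sqrt Real.pi := by
      rw [← sub1, gauss]
    rw [h1val, hIg0] at hIg
    field_simp at hIg ⊢
    linarith
  -- conclude
  have hfinal : ∀ t ∈ Set.Ioi (0:ℝ),
      Real.exp (-(b * t ^ 2 + a / t ^ 2)) = Real.exp (-(2 * (sa * sb))) * h0 t := by
    intro t ht
    have ht' : (0:ℝ) < t := ht
    have ht0 : t ≠ 0 := ne_of_gt ht'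
    rw [hh0]
    simp only
    rw [← Real.exp_add]
    congr 1
    have hsq : (φ t) ^ 2 = b * t ^ 2 + a / t ^ 2 - 2 * (sa * sb) := by
      simp only [hφ]
      field_simp
      ring_nf
      linear_combination t ^ 4 * hsb2 + hsa2
    rw [hsq]; ring
  rw [setIntegral_congr_fun hmeas hfinal, MeasureTheory.integral_const_mul, hI0val,
    Real.sqrt_mul ha.le, ← hsa, ← hsb]
  ring

lemma glasser' (a b : ℝ) (ha : 0 ≤ a) (hb : 0 < b) :
    ∫ t in Set.Ioi (0:ℝ), Real.exp (-(b * t ^ 2 + a / t ^ 2)) =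
      Real.sqrt Real.pi / (2 * Real.sqrt b) * Real.exp (-(2 * Real.sqrt (a * b))) := by
  rcases ha.lt_or_eq with h | h
  · exact glasser a b h hb
  · have h0 : a = 0 := h.symm
    subst h0
    have : ∫ t in Set.Ioi (0:ℝ), Real.exp (-(b * t ^ 2 + 0 / t ^ 2))
        = ∫ t in Set.Ioi (0:ℝ), Real.exp (-b * t ^ 2) := by
      apply setIntegral_congr_fun measurableSet_Ioi
      intro t _
      norm_num
    rw [this, integral_gaussian_Ioi b, zero_mul, Real.sqrt_zero, mul_zero,
      neg_zero, Real.exp_zero, mul_one, Real.sqrt_div' Real.pi hb.le]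
    rw [div_div, mul_comm (Real.sqrt b) 2]


/-- The Laplace distribution is an exponential scale mixture of normals: for every `x : ℝ`
and `λ > 0`, `∫_0^∞ (2πs)^{-1/2} exp(-x²/(2s)) · (λ²/2) exp(-λ² s/2) ds = (λ/2) exp(-λ|x|)`. -/
theorem statement9 (x lam : ℝ) (hlam : 0 < lam) :
    ∫ s in Set.Ioi (0 : ℝ),
        Real.exp (-(x ^ 2) / (2 * s)) / Real.sqrt (2 * Real.pi * s) *
          (lam ^ 2 / 2 * Real.exp (-(lam ^ 2) * s / 2)) =
      lam / 2 * Real.exp (-lam * |x|) := by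
  have hmeas : MeasurableSet (Set.Ioi (0:ℝ)) := measurableSet_Ioi
  set F : ℝ → ℝ := fun s =>
    Real.exp (-(x ^ 2) / (2 * s)) / Real.sqrt (2 * Real.pi * s) *
      (lam ^ 2 / 2 * Real.exp (-(lam ^ 2) * s / 2)) with hF
  have himg : (fun t : ℝ => t ^ 2) '' Set.Ioi 0 = Set.Ioi 0 := by
    ext u
    constructor
    · rintro ⟨t, ht, rfl⟩
      exact pow_pos (Set.mem_Ioi.1 ht) 2
    · intro hu
      have hu' : (0:ℝ) < u := hu
      exact ⟨Real.sqrt u, Real.sqrt_pos.2 hu', Real.sq_sqrt hu'.le⟩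
  have hderiv : ∀ t ∈ Set.Ioi (0:ℝ),
      HasDerivWithinAt (fun t : ℝ => t ^ 2) (2 * t) (Set.Ioi 0) t := by
    intro t _
    simpa using (hasDerivAt_pow 2 t).hasDerivWithinAt
  have hinj : Set.InjOn (fun t : ℝ => t ^ 2) (Set.Ioi 0) := by
    intro t ht u hu h
    simp only [Set.mem_Ioi] at ht hu
    have h' : t ^ 2 = u ^ 2 := h
    nlinarith
  have hsub : ∫ s in Set.Ioi (0:ℝ), F s
      = ∫ t in Set.Ioi (0:ℝ), |2 * t| • F (t ^ 2) := by
    conv_lhs => rw [← himg]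
    exact integral_image_eq_integral_abs_deriv_smul hmeas hderiv hinj F
  have hpt : ∀ t ∈ Set.Ioi (0:ℝ), |2 * t| • F (t ^ 2)
      = lam ^ 2 / Real.sqrt (2 * Real.pi) *
        Real.exp (-(lam ^ 2 / 2 * t ^ 2 + x ^ 2 / 2 / t ^ 2)) := by
    intro t ht
    have ht' : (0:ℝ) < t := ht
    have habs : |2 * t| = 2 * t := abs_of_pos (by linarith)
    have hsq : Real.sqrt (2 * Real.pi * t ^ 2) = Real.sqrt (2 * Real.pi) * t := by
      rw [Real.sqrt_mul (by positivity), Real.sqrt_sq ht'.le]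
    rw [habs, smul_eq_mul, hF]
    simp only
    rw [hsq]
    have h2pi : (0:ℝ) < Real.sqrt (2 * Real.pi) := Real.sqrt_pos.2 (by positivity)
    rw [show -(lam ^ 2 / 2 * t ^ 2 + x ^ 2 / 2 / t ^ 2)
        = -(x ^ 2) / (2 * t ^ 2) + -(lam ^ 2) * t ^ 2 / 2 by ring, Real.exp_add]
    field_simp
  rw [hsub, setIntegral_congr_fun hmeas hpt, MeasureTheory.integral_const_mul,
    glasser' (x ^ 2 / 2) (lam ^ 2 / 2) (by positivity) (by positivity)]
  have h1 : Real.sqrt (lam ^ 2 / 2) = lam / Real.sqrt 2 := by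
    rw [Real.sqrt_div' (lam ^ 2) (by norm_num), Real.sqrt_sq hlam.le]
  have h2 : Real.sqrt (x ^ 2 / 2 * (lam ^ 2 / 2)) = |x| * lam / 2 := by
    rw [show x ^ 2 / 2 * (lam ^ 2 / 2) = (|x| * lam / 2) ^ 2 by
      rw [div_pow, mul_pow, sq_abs]; ring]
    exact Real.sqrt_sq (by positivity)
  have h4 : Real.sqrt (2 * Real.pi) = Real.sqrt 2 * Real.sqrt Real.pi :=
    Real.sqrt_mul (by norm_num) _
  rw [h1, h2, h4, show -(2 * (|x| * lam / 2)) = -lam * |x| by ring]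
  have hs2 : (0:ℝ) < Real.sqrt 2 := Real.sqrt_pos.2 (by norm_num)
  have hspi : (0:ℝ) < Real.sqrt Real.pi := Real.sqrt_pos.2 Real.pi_pos
  rw [show lam ^ 2 / (Real.sqrt 2 * Real.sqrt Real.pi) *
      (Real.sqrt Real.pi / (2 * (lam / Real.sqrt 2)) * Real.exp (-lam * |x|))
      = (lam ^ 2 * Real.sqrt Real.pi * Real.sqrt 2 /
        (Real.sqrt 2 * Real.sqrt Real.pi * (2 * lam))) * Real.exp (-lam * |x|) by
      field_simp]
  congr 1
  field_simp
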